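/- The involution σ(w) = (−w_1/w_n, ..., −w_{n-1}/w_n, 1/w_n) is a holomorphic automorphism of H^n satisfying σ ∘ σ = id and σ(0,...,0,1) = (0,...,0,1), and its pushforwards of the basic vector fields satisfy: σ_*(T) = −2i w_n (D − w_n ∂/∂w_n), σ_*(T^{2,k}) = 2w_k(D − w_n ∂/∂w_n) − w_n ∂/∂w_k, σ_*(T^{3,k}) = −2i w_k(D − w_n ∂/∂w_n) − i w_n ∂/∂w_k. -/

import Mathlib

open Complex

/-- ρ(w) = Re w_n − |w'|². -/
noncomputable def rho {n : ℕ} (w : Fin (n+1) → ℂ) : ℝ :=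
  (w (Fin.last n)).re - ∑ i : Fin n, ‖w i.castSucc‖ ^ 2

/-- The involution σ(w) = (−w'/w_n, 1/w_n). -/
noncomputable def sigmaInv {n : ℕ} (w : Fin (n+1) → ℂ) : Fin (n+1) → ℂ :=
  fun i => if i = Fin.last n then 1 / w (Fin.last n) else - w i / w (Fin.last n)

/-- Coefficients of T = 2i ∂/∂w_n. -/
def Tv {n : ℕ} (w : Fin (n+1) → ℂ) (i : Fin (n+1)) : ℂ :=
  if i = Fin.last n then 2 * Complex.I else 0

/-- Coefficients of T^{2,k} = 2w_k ∂/∂w_n + ∂/∂w_k. -/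
def T2v {n : ℕ} (k : Fin n) (w : Fin (n+1) → ℂ) (i : Fin (n+1)) : ℂ :=
  if i = Fin.last n then 2 * w k.castSucc else if i = k.castSucc then 1 else 0

/-- Coefficients of T^{3,k} = −2i w_k ∂/∂w_n + i ∂/∂w_k. -/
def T3v {n : ℕ} (k : Fin n) (w : Fin (n+1) → ℂ) (i : Fin (n+1)) : ℂ :=
  if i = Fin.last n then -2 * Complex.I * w k.castSucc
  else if i = k.castSucc then Complex.I else 0

/-- Coefficients of D − w_n ∂/∂w_n (= Σ_k w_k ∂/∂w_k + w_n ∂/∂w_n). -/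
def DEv {n : ℕ} (v : Fin (n+1) → ℂ) (i : Fin (n+1)) : ℂ := v i

/-- Coefficients of T̃ = −2i w_n (D − w_n ∂/∂w_n). -/
def Ttil {n : ℕ} (v : Fin (n+1) → ℂ) (i : Fin (n+1)) : ℂ :=
  -2 * Complex.I * v (Fin.last n) * DEv v i

/-- Coefficients of T̃^{2,k} = 2w_k(D − w_n ∂/∂w_n) − w_n ∂/∂w_k. -/
def T2til {n : ℕ} (k : Fin n) (v : Fin (n+1) → ℂ) (i : Fin (n+1)) : ℂ :=
  2 * v k.castSucc * DEv v i - (if i = k.castSucc then v (Fin.last n) else 0)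

/-- Coefficients of T̃^{3,k} = −2i w_k(D − w_n ∂/∂w_n) − i w_n ∂/∂w_k. -/
def T3til {n : ℕ} (k : Fin n) (v : Fin (n+1) → ℂ) (i : Fin (n+1)) : ℂ :=
  -2 * Complex.I * v k.castSucc * DEv v i -
    Complex.I * (if i = k.castSucc then v (Fin.last n) else 0)

/-! ### Auxiliary material -/

noncomputable def sigmaDeriv {n : ℕ} (w : Fin (n+1) → ℂ) :
    (Fin (n+1) → ℂ) →L[ℂ] (Fin (n+1) → ℂ) :=
  ContinuousLinearMap.pi fun i =>
    if i = Fin.last n then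
      (-((w (Fin.last n)) ^ 2)⁻¹) • ContinuousLinearMap.proj (Fin.last n)
    else
      (w i * ((w (Fin.last n)) ^ 2)⁻¹) • ContinuousLinearMap.proj (Fin.last n)
        + (-(w (Fin.last n))⁻¹) • ContinuousLinearMap.proj i

lemma sigmaInv_hasFDerivAt {n : ℕ} (w : Fin (n+1) → ℂ) (hw : w (Fin.last n) ≠ 0) :
    HasFDerivAt (sigmaInv (n := n)) (sigmaDeriv w) w := by
  unfold sigmaInv sigmaDeriv
  refine hasFDerivAt_pi'' (𝕜 := ℂ) fun i => ?_
  rw [ContinuousLinearMap.proj_pi]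
  have hinv : HasFDerivAt (fun w : Fin (n+1) → ℂ => (w (Fin.last n))⁻¹)
      (-(((w (Fin.last n)) ^ 2)⁻¹ • ContinuousLinearMap.proj (R := ℂ) (Fin.last n))) w := by
    exact (HasDerivAt.comp_hasFDerivAt (𝕜 := ℂ) w (hasDerivAt_inv hw)
        (hasFDerivAt_apply (𝕜 := ℂ) (Fin.last n) w)).congr_fderiv (by ext v; simp)
  by_cases hi : i = Fin.last n
  · subst hi
    simp only [eq_self_iff_true, if_true, one_div]
    exact hinv.congr_fderiv (neg_smul _ _).symm
  · simp only [if_neg hi, div_eq_mul_inv]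
    have hmul := ((hasFDerivAt_apply (𝕜 := ℂ) i w).neg).mul hinv
    refine hmul.congr_fderiv ?_
    refine ContinuousLinearMap.ext fun v => ?_
    simp only [ContinuousLinearMap.smul_apply, ContinuousLinearMap.add_apply,
      ContinuousLinearMap.proj_apply, ContinuousLinearMap.neg_apply, smul_eq_mul, Pi.neg_apply]
    ring

lemma sigmaDeriv_apply {n : ℕ} (w v : Fin (n+1) → ℂ) (i : Fin (n+1)) :
    sigmaDeriv w v i =
      if i = Fin.last n then -((w (Fin.last n)) ^ 2)⁻¹ * v (Fin.last n)
      else w i * ((w (Fin.last n)) ^ 2)⁻¹ * v (Fin.last n) - (w (Fin.last n))⁻¹ * v i := by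
  unfold sigmaDeriv
  by_cases hi : i = Fin.last n <;>
    simp [hi, ContinuousLinearMap.pi_apply, sub_eq_add_neg] <;> ring

lemma last_ne_zero_of_rho {n : ℕ} {w : Fin (n+1) → ℂ} (h : 0 < rho w) :
    w (Fin.last n) ≠ 0 := by
  intro h0
  have hsum : (0:ℝ) ≤ ∑ i : Fin n, ‖w i.castSucc‖ ^ 2 :=
    Finset.sum_nonneg fun i _ => sq_nonneg _
  have : rho w ≤ 0 := by
    unfold rho
    rw [h0]
    simpa using hsum
  linarith

lemma rho_sigmaInv {n : ℕ} (w : Fin (n+1) → ℂ) :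
    rho (sigmaInv w) = rho w / Complex.normSq (w (Fin.last n)) := by
  have hlt : ∀ i : Fin n, i.castSucc ≠ Fin.last n := fun i => (Fin.castSucc_lt_last i).ne
  unfold rho sigmaInv
  simp only [eq_self_iff_true, if_true, hlt, if_false, if_neg (hlt _)]
  rw [one_div, Complex.inv_re]
  have habs : ∀ i : Fin n,
      ‖-w i.castSucc / w (Fin.last n)‖ ^ 2
        = ‖w i.castSucc‖ ^ 2 / Complex.normSq (w (Fin.last n)) := by
    intro i
    simp only [norm_div, norm_neg, div_pow, Complex.sq_norm]
  rw [Finset.sum_congr rfl fun i _ => habs i, ← Finset.sum_div, ← sub_div]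

/-- σ is a holomorphic automorphism of the Siegel domain H with σ∘σ = id,
fixing (0,…,0,1), and its pushforwards satisfy σ_*(T) = T̃, σ_*(T^{2,k}) = T̃^{2,k},
σ_*(T^{3,k}) = T̃^{3,k}. -/
theorem sigma_involution (n : ℕ) (H : Set (Fin (n+1) → ℂ)) (hH : H = {w | 0 < rho w}) :
    Set.BijOn (sigmaInv (n := n)) H H ∧
    DifferentiableOn ℂ (sigmaInv (n := n)) H ∧
    (∀ w ∈ H, sigmaInv (sigmaInv w) = w) ∧
    sigmaInv (fun i => if i = Fin.last n then 1 else 0)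
      = (fun i => if i = Fin.last n then 1 else 0) ∧
    (∀ w ∈ H, fderiv ℂ (sigmaInv (n := n)) w (Tv w) = Ttil (sigmaInv w)) ∧
    (∀ w ∈ H, ∀ k : Fin n,
      fderiv ℂ (sigmaInv (n := n)) w (T2v k w) = T2til k (sigmaInv w)) ∧
    (∀ w ∈ H, ∀ k : Fin n,
      fderiv ℂ (sigmaInv (n := n)) w (T3v k w) = T3til k (sigmaInv w)) := by
  subst hH
  have hne : ∀ w : Fin (n+1) → ℂ, 0 < rho w → w (Fin.last n) ≠ 0 :=
    fun w h => last_ne_zero_of_rho h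
  have hmaps : Set.MapsTo (sigmaInv (n := n)) {w | 0 < rho w} {w | 0 < rho w} := by
    intro w hw
    have hw' : 0 < rho w := hw
    have : 0 < Complex.normSq (w (Fin.last n)) := Complex.normSq_pos.2 (hne w hw')
    simp only [Set.mem_setOf_eq, rho_sigmaInv]
    exact div_pos hw' this
  have hinvol : ∀ w ∈ {w : Fin (n+1) → ℂ | 0 < rho w}, sigmaInv (sigmaInv w) = w := by
    intro w hw
    have h0 := hne w hw
    funext i
    by_cases hi : i = Fin.last n
    · subst hi
      simp [sigmaInv, one_div_one_div]
    · simp only [sigmaInv, if_neg hi, eq_self_iff_true, if_true]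
      field_simp
  refine ⟨?_, ?_, hinvol, ?_, ?_, ?_, ?_⟩
  · exact Set.InvOn.bijOn ⟨hinvol, hinvol⟩ hmaps hmaps
  · intro w hw
    exact ((sigmaInv_hasFDerivAt w (hne w hw)).differentiableAt).differentiableWithinAt
  · funext i
    by_cases hi : i = Fin.last n <;> simp [sigmaInv, hi]
  · intro w hw
    have h0 := hne w hw
    rw [(sigmaInv_hasFDerivAt w h0).fderiv]
    funext i
    rw [sigmaDeriv_apply]
    by_cases hi : i = Fin.last n
    · subst hi
      simp only [eq_self_iff_true, if_true, Ttil, DEv, sigmaInv, Tv]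
      field_simp
    · simp only [if_neg hi, Ttil, DEv, sigmaInv, Tv, eq_self_iff_true, if_true]
      field_simp
      ring
  · intro w hw k
    have h0 := hne w hw
    have hks : (k.castSucc : Fin (n+1)) ≠ Fin.last n := (Fin.castSucc_lt_last k).ne
    rw [(sigmaInv_hasFDerivAt w h0).fderiv]
    funext i
    rw [sigmaDeriv_apply]
    by_cases hi : i = Fin.last n
    · subst hi
      simp only [eq_self_iff_true, if_true, T2til, DEv, sigmaInv, T2v, if_neg (Ne.symm hks),
        if_neg hks, eq_self_iff_true, if_true]
      field_simp
      ring_nf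
    · by_cases hik : i = k.castSucc
      · subst hik
        simp only [if_neg hi, T2til, DEv, sigmaInv, T2v, eq_self_iff_true, if_true, if_neg hi, if_neg hks]
        field_simp
      · simp only [if_neg hi, if_neg hik, T2til, DEv, sigmaInv, T2v, eq_self_iff_true, if_true, if_neg hks]
        field_simp
        ring
  · intro w hw k
    have h0 := hne w hw
    have hks : (k.castSucc : Fin (n+1)) ≠ Fin.last n := (Fin.castSucc_lt_last k).ne
    rw [(sigmaInv_hasFDerivAt w h0).fderiv]
    funext i
    rw [sigmaDeriv_apply]
    by_cases hi : i = Fin.last n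
    · subst hi
      simp only [eq_self_iff_true, if_true, T3til, DEv, sigmaInv, T3v, if_neg (Ne.symm hks),
        if_neg hks, eq_self_iff_true, if_true]
      field_simp
      ring_nf
    · by_cases hik : i = k.castSucc
      · subst hik
        simp only [if_neg hi, T3til, DEv, sigmaInv, T3v, eq_self_iff_true, if_true, if_neg hi, if_neg hks]
        field_simp
      · simp only [if_neg hi, if_neg hik, T3til, DEv, sigmaInv, T3v, eq_self_iff_true, if_true, if_neg hks]
        field_simp
        ring
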